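/- Let p and q be positive integers and let π be a partition of [p+q] with no (p,q)-connecting block, so that π = π_ext ∪ π_int where π_ext is a partition of {1,...,p} and π_int is a partition of {p+1,...,p+q}. Then π ∈ NC_ann(p,q) if and only if π_ext ∈ NC_disc({1,...,p}) and π_int ∈ NC_disc({p+1,...,p+q}). -/

import Mathlib

/-- The permutation induced by `f` on the subset `B`: an element `b` is sent to the first
element of the sequence `f b, f (f b), f (f (f b)), ...` that lies in `B`
(and is left fixed if no iterate ever returns to `B`). -/
noncomputable def induced {α : Type*} (f : α → α) (B : Set α) (b : α) : α := by
  classical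
  exact if h : ∃ k, 0 < k ∧ f^[k] b ∈ B then f^[Nat.find h] b else b

/-- `A` is an orbit of the permutation `τ`. -/
def IsOrbit {α : Type*} (τ : Equiv.Perm α) (A : Set α) : Prop :=
  ∃ a, A = {b | τ.SameCycle a b}

/-- The number of orbits of `τ` (fixed points count as orbits). -/
noncomputable def numOrbits {α : Type*} (τ : Equiv.Perm α) : ℕ :=
  Set.ncard {A : Set α | IsOrbit τ A}

/-- `induced f S` acts on `a, b, c` as the 3-cycle `(a, b, c)`. -/
def MapsCyc3 {α : Type*} (f : α → α) (S : Set α) (a b c : α) : Prop :=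
  induced f S a = b ∧ induced f S b = c ∧ induced f S c = a

/-- `induced f S` acts on `a, b, c, d` as the 4-cycle `(a, b, c, d)`. -/
def MapsCyc4 {α : Type*} (f : α → α) (S : Set α) (a b c d : α) : Prop :=
  induced f S a = b ∧ induced f S b = c ∧ induced f S c = d ∧ induced f S d = a

/-- `induced f S` acts on `a, b, c, d` as the product of transpositions `(a, c)(b, d)`. -/
def MapsSwap2 {α : Type*} (f : α → α) (S : Set α) (a b c d : α) : Prop :=
  induced f S a = c ∧ induced f S c = a ∧ induced f S b = d ∧ induced f S d = b

/-- `induced f S` acts on `x, y` as the transposition `(x, y)`. -/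
def MapsSwap {α : Type*} (f : α → α) (S : Set α) (x y : α) : Prop :=
  induced f S x = y ∧ induced f S y = x

/-- `σ` is standard with respect to the "forward cycle" `γ₀`, i.e. `σ∣B = γ₀∣B` for
every orbit `B` of `σ`. -/
def DiscStandardRel {n : ℕ} (γ₀ σ : Equiv.Perm (Fin n)) : Prop :=
  ∀ A : Set (Fin n), IsOrbit σ A → ∀ b ∈ A, induced (⇑σ) A b = induced (⇑γ₀) A b

/-- The orbit partition of `σ` has no crossing: there are no `a < b < c < d` with
`a, c` in one orbit and `b, d` in a different orbit. -/
def OrbitsNoCrossing {n : ℕ} (σ : Equiv.Perm (Fin n)) : Prop :=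
  ¬ ∃ a b c d : Fin n, a < b ∧ b < c ∧ c < d ∧
      σ.SameCycle a c ∧ σ.SameCycle b d ∧ ¬ σ.SameCycle a b

/-- Disc non-crossing relative to a given forward cycle `γ₀`. -/
def DiscNCRel {n : ℕ} (γ₀ σ : Equiv.Perm (Fin n)) : Prop :=
  DiscStandardRel γ₀ σ ∧ OrbitsNoCrossing σ

/-- The set `S_disc-nc(n)` of disc non-crossing permutations of `[n]`
(here `[n] = {1, …, n}` is modelled by `Fin n`, and the forward cycle
`γ₀ = (1, 2, …, n)` is `finRotate n`). -/
def DiscNC {n : ℕ} (σ : Equiv.Perm (Fin n)) : Prop :=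
  DiscNCRel (finRotate n) σ

/-- The external points `{1, …, p}` (0-indexed: values `< p`). -/
def extSet (p q : ℕ) : Set (Fin (p + q)) := {i | (i : ℕ) < p}

/-- The internal points `{p+1, …, p+q}` (0-indexed: values `≥ p`). -/
def intSet (p q : ℕ) : Set (Fin (p + q)) := {i | p ≤ (i : ℕ)}

/-- `γ_ext = (1, 2, …, p)`, the forward cycle on the external points. -/
def gammaExt (p q : ℕ) : Equiv.Perm (Fin (p + q)) :=
  ((List.finRange (p + q)).take p).formPerm

/-- `γ_int = (p+1, p+2, …, p+q)`, the forward cycle on the internal points. -/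
def gammaInt (p q : ℕ) : Equiv.Perm (Fin (p + q)) :=
  ((List.finRange (p + q)).drop p).formPerm

/-- `γ = γ_ext · γ_int`. -/
def gammaAnn (p q : ℕ) : Equiv.Perm (Fin (p + q)) := gammaExt p q * gammaInt p q

/-- `λ_{x,y}`: the permutation fixing `x` and `y` and cycling the remaining points as
`(γ_ext(x), γ_ext²(x), …, γ_ext^{p-1}(x), γ_int(y), γ_int²(y), …, γ_int^{q-1}(y))`. -/
def lamPerm (p q : ℕ) (x y : Fin (p + q)) : Equiv.Perm (Fin (p + q)) :=
  (((List.range (p - 1)).map fun k => (gammaExt p q ^ (k + 1)) x) ++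
    ((List.range (q - 1)).map fun k => (gammaInt p q ^ (k + 1)) y)).formPerm

/-- `τ` is standard in `(p,q)`-annular sense. -/
def AnnStandard (p q : ℕ) (τ : Equiv.Perm (Fin (p + q))) : Prop :=
  (∀ A : Set (Fin (p + q)), IsOrbit τ A →
    (∀ b ∈ A ∩ extSet p q,
        induced (⇑τ) (A ∩ extSet p q) b = induced (⇑(gammaExt p q)) (A ∩ extSet p q) b) ∧
    (∀ b ∈ A ∩ intSet p q,
        induced (⇑τ) (A ∩ intSet p q) b = induced (⇑(gammaInt p q)) (A ∩ intSet p q) b)) ∧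
  (∀ A : Set (Fin (p + q)), IsOrbit τ A →
    (A ∩ extSet p q).Nonempty → (A ∩ intSet p q).Nonempty →
    (∃! a, a ∈ A ∩ extSet p q ∧ τ a ∈ intSet p q) ∧
    (∃! a, a ∈ A ∩ intSet p q ∧ τ a ∈ extSet p q))

/-- The annular crossing pattern (AC-1). -/
def AC1 (p q : ℕ) (τ : Equiv.Perm (Fin (p + q))) : Prop :=
  ∃ a b c d : Fin (p + q), List.Pairwise (· ≠ ·) [a, b, c, d] ∧
    MapsCyc4 (⇑(gammaAnn p q)) {a, b, c, d} a b c d ∧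
    MapsSwap2 (⇑τ) {a, b, c, d} a b c d

/-- The annular crossing pattern (AC-2). -/
def AC2 (p q : ℕ) (τ : Equiv.Perm (Fin (p + q))) : Prop :=
  ∃ a b c x y : Fin (p + q), List.Pairwise (· ≠ ·) [a, b, c, x, y] ∧
    x ∈ extSet p q ∧ y ∈ intSet p q ∧
    MapsCyc3 (⇑(lamPerm p q x y)) {a, b, c} a b c ∧
    MapsCyc3 (⇑τ) {a, b, c, x, y} a c b ∧
    MapsSwap (⇑τ) {a, b, c, x, y} x y

/-- The annular crossing pattern (AC-3). -/
def AC3 (p q : ℕ) (τ : Equiv.Perm (Fin (p + q))) : Prop :=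
  ∃ a b c d x y : Fin (p + q), List.Pairwise (· ≠ ·) [a, b, c, d, x, y] ∧
    x ∈ extSet p q ∧ y ∈ intSet p q ∧
    MapsCyc4 (⇑(lamPerm p q x y)) {a, b, c, d} a b c d ∧
    MapsSwap2 (⇑τ) {a, b, c, d, x, y} a b c d ∧
    MapsSwap (⇑τ) {a, b, c, d, x, y} x y

/-- The set `S_ann-nc(p,q)` of `(p,q)`-annular non-crossing permutations. -/
def AnnNC (p q : ℕ) (τ : Equiv.Perm (Fin (p + q))) : Prop :=
  AnnStandard p q τ ∧ ¬ AC1 p q τ ∧ ¬ AC2 p q τ ∧ ¬ AC3 p q τ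

/-- A `(p,q)`-connecting set: meets both the external and internal points. -/
def ConnectingBlock (p q : ℕ) (B : Set (Fin (p + q))) : Prop :=
  (B ∩ extSet p q).Nonempty ∧ (B ∩ intSet p q).Nonempty

/-- `τ` is `(p,q)`-connected: it has a `(p,q)`-connecting orbit. -/
def AnnConnected (p q : ℕ) (τ : Equiv.Perm (Fin (p + q))) : Prop :=
  ∃ A : Set (Fin (p + q)), IsOrbit τ A ∧ ConnectingBlock p q A

/-- A family of blocks has no crossing: no `a < b < c < d` with `a, c` in one block and
`b, d` in a different block. -/
def NoCrossing {n : ℕ} (ρ : Set (Set (Fin n))) : Prop :=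
  ¬ ∃ (a b c d : Fin n) (B C : Set (Fin n)), B ∈ ρ ∧ C ∈ ρ ∧ B ≠ C ∧
      a < b ∧ b < c ∧ c < d ∧ a ∈ B ∧ c ∈ B ∧ b ∈ C ∧ d ∈ C


set_option linter.unusedSectionVars false
set_option linter.unusedVariables false
section base
open Equiv Function List

variable {α : Type*} {f g : α → α} {S : Set α} {b : α}

lemma induced_spec (h : ∃ k, 0 < k ∧ f^[k] b ∈ S) :
    ∃ m, 0 < m ∧ f^[m] b ∈ S ∧ induced f S b = f^[m] b ∧
      ∀ j, 0 < j → f^[j] b ∈ S → m ≤ j := by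
  classical
  refine ⟨Nat.find h, (Nat.find_spec h).1, (Nat.find_spec h).2, ?_, ?_⟩
  · simp only [induced]; rw [dif_pos h]
  · exact fun j hj hjS => Nat.find_min' h ⟨hj, hjS⟩

lemma induced_eq_of {m : ℕ} (hm : 0 < m) (hmS : f^[m] b ∈ S)
    (hmin : ∀ j, 0 < j → j < m → f^[j] b ∉ S) : induced f S b = f^[m] b := by
  obtain ⟨m', hm', hm'S, heq, hmin'⟩ := induced_spec ⟨m, hm, hmS⟩
  have h1 : m' ≤ m := hmin' m hm hmS
  rcases h1.lt_or_eq with h | h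
  · exact absurd hm'S (hmin m' hm' h)
  · rw [heq, h]

lemma induced_of_not_exists (h : ¬ ∃ k, 0 < k ∧ f^[k] b ∈ S) : induced f S b = b := by
  classical
  simp only [induced]; rw [dif_neg h]

lemma induced_congr (h : ∀ k, f^[k] b = g^[k] b) : induced f S b = induced g S b := by
  by_cases he : ∃ k, 0 < k ∧ f^[k] b ∈ S
  · obtain ⟨m, hm, hmS, heq, hmin⟩ := induced_spec he
    rw [heq, h m]
    exact (induced_eq_of hm (h m ▸ hmS) (fun j hj hjm hjS => Nat.not_lt_of_le (hmin j hj (by rwa [h j])) hjm)).symm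
  · have he' : ¬ ∃ k, 0 < k ∧ g^[k] b ∈ S := by simp_rw [← h]; exact he
    rw [induced_of_not_exists he, induced_of_not_exists he']

lemma induced_apply_mem (h : f b ∈ S) : induced f S b = f b :=
  induced_eq_of Nat.one_pos (by simpa) (by omega)

end base

section perm
open Equiv Function

variable {α : Type*} [Finite α] {τ : Equiv.Perm α} {S : Set α} {a b c : α}

lemma iterate_orderOf_apply (τ : Equiv.Perm α) (b : α) : (⇑τ)^[orderOf τ] b = b := by
  rw [Equiv.Perm.iterate_eq_pow, pow_orderOf_eq_one]; rfl

lemma exists_pos_iterate (hb : b ∈ S) : ∃ k, 0 < k ∧ (⇑τ)^[k] b ∈ S :=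
  ⟨orderOf τ, orderOf_pos τ, by rwa [iterate_orderOf_apply]⟩

lemma sameCycle_iterate (τ : Equiv.Perm α) (k : ℕ) (b : α) :
    τ.SameCycle b ((⇑τ)^[k] b) :=
  ⟨(k : ℤ), by rw [zpow_natCast, ← Equiv.Perm.iterate_eq_pow]⟩

lemma exists_pos_iterate_of_sameCycle (h : τ.SameCycle a c) (hne : c ≠ a) :
    ∃ k, 0 < k ∧ (⇑τ)^[k] a = c := by
  obtain ⟨i, _, hi⟩ := h.exists_pow_eq'
  rcases Nat.eq_zero_or_pos i with rfl | hpos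
  · simp at hi; exact absurd hi.symm hne
  · exact ⟨i, hpos, by rw [Equiv.Perm.iterate_eq_pow]; exact hi⟩

lemma induced_perm_spec (hb : b ∈ S) :
    ∃ m, 0 < m ∧ (⇑τ)^[m] b ∈ S ∧ induced (⇑τ) S b = (⇑τ)^[m] b ∧
      ∀ j, 0 < j → (⇑τ)^[j] b ∈ S → m ≤ j :=
  induced_spec (exists_pos_iterate hb)

lemma sameCycle_induced (hb : b ∈ S) : τ.SameCycle b (induced (⇑τ) S b) := by
  obtain ⟨m, _, _, heq, _⟩ := induced_perm_spec (τ := τ) hb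
  rw [heq]; exact sameCycle_iterate τ m b

lemma induced_eq_of_orbit (ha : a ∈ S) (hc : c ∈ S) (hne : c ≠ a)
    (hsc : τ.SameCycle a c)
    (honly : ∀ z ∈ S, τ.SameCycle a z → z = a ∨ z = c) :
    induced (⇑τ) S a = c := by
  classical
  have hex : ∃ j, 0 < j ∧ (⇑τ)^[j] a = c := exists_pos_iterate_of_sameCycle hsc hne
  set j := Nat.find hex with hj
  obtain ⟨hjpos, hjc⟩ := Nat.find_spec hex
  obtain ⟨m, hmpos, hmS, heq, hmin⟩ := induced_perm_spec (τ := τ) ha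
  have hmj : m ≤ j := hmin j hjpos (hjc ▸ hc)
  rcases honly _ hmS (sameCycle_iterate τ m a) with hz | hz
  · exfalso
    have hmlt : m < j := by
      rcases hmj.lt_or_eq with h | h
      · exact h
      · exact absurd (by rw [← hjc, ← hj, ← h, hz] : c = a) hne
    have : (⇑τ)^[j - m] a = c := by
      have := Function.iterate_add_apply (⇑τ) (j - m) m a
      rw [Nat.sub_add_cancel hmj] at this
      rw [← hjc, this, hz]
    exact absurd (Nat.find_min' hex ⟨by omega, this⟩) (by omega)
  · rw [heq, hz]

lemma not_sameCycle_of_swap (ha : a ∈ S) (hb : b ∈ S) (hc : c ∈ S)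
    (hba : b ≠ a) (hbc : b ≠ c)
    (h1 : induced (⇑τ) S a = c) (h2 : induced (⇑τ) S c = a) :
    ¬ τ.SameCycle a b := by
  intro hsc
  obtain ⟨t, htpos, htb⟩ := exists_pos_iterate_of_sameCycle hsc hba
  obtain ⟨m1, hm1pos, _, heq1, hmin1⟩ := induced_perm_spec (τ := τ) ha
  obtain ⟨m2, hm2pos, _, heq2, hmin2⟩ := induced_perm_spec (τ := τ) hc
  rw [h1] at heq1; rw [h2] at heq2
  have hN : (⇑τ)^[m1 + m2] a = a := by
    rw [Nat.add_comm, Function.iterate_add_apply, ← heq1, ← heq2]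
  have hper : Function.IsPeriodicPt (⇑τ) (m1 + m2) a := hN
  set t' := t % (m1 + m2) with ht'
  have htb' : (⇑τ)^[t'] a = b := by rw [ht', hper.iterate_mod_apply, htb]
  have ht'lt : t' < m1 + m2 := Nat.mod_lt _ (by omega)
  have ht'pos : 0 < t' := by
    rcases Nat.eq_zero_or_pos t' with h | h
    · rw [h] at htb'; simp at htb'; exact absurd htb'.symm hba
    · exact h
  have h1' : m1 ≤ t' := hmin1 t' ht'pos (htb' ▸ hb)
  have hm1t : m1 < t' := by
    rcases h1'.lt_or_eq with h | h
    · exact h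
    · exact absurd (by rw [← htb', ← h, ← heq1]) hbc.symm
  have : (⇑τ)^[t' - m1] c = b := by
    have := Function.iterate_add_apply (⇑τ) (t' - m1) m1 a
    rw [Nat.sub_add_cancel h1'] at this
    rw [heq1, ← this, htb']
  have := hmin2 (t' - m1) (by omega) (this ▸ hb)
  omega

end perm

section gam
open Equiv Function List
variable {p q : ℕ} {x a : Fin (p + q)}

lemma take_len : ((List.finRange (p + q)).take p).length = p := by
  simp [List.length_take, Nat.min_eq_left (Nat.le_add_right p q)]

lemma drop_len : ((List.finRange (p + q)).drop p).length = q := by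
  simp [List.length_drop]

lemma take_getElem {i : ℕ} (h : i < ((List.finRange (p + q)).take p).length) :
    ((List.finRange (p + q)).take p)[i] = ⟨i, by rw [take_len] at h; omega⟩ := by
  simp [List.getElem_take]

lemma drop_getElem {i : ℕ} (h : i < ((List.finRange (p + q)).drop p).length) :
    ((List.finRange (p + q)).drop p)[i] = ⟨p + i, by rw [drop_len] at h; omega⟩ := by
  simp [List.getElem_drop]

lemma take_nodup : ((List.finRange (p + q)).take p).Nodup :=
  (List.nodup_finRange _).sublist (List.take_sublist _ _)

lemma drop_nodup : ((List.finRange (p + q)).drop p).Nodup :=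
  (List.nodup_finRange _).sublist (List.drop_sublist _ _)

lemma mem_take_iff : x ∈ (List.finRange (p + q)).take p ↔ (x : ℕ) < p := by
  constructor
  · intro hx
    obtain ⟨i, hi, hx⟩ := List.mem_iff_getElem.mp hx
    rw [take_getElem hi] at hx
    rw [← hx]
    simpa [take_len] using hi
  · intro hx
    refine List.mem_iff_getElem.mpr ⟨(x : ℕ), by rw [take_len]; exact hx, ?_⟩
    rw [take_getElem]

lemma mem_drop_iff : x ∈ (List.finRange (p + q)).drop p ↔ p ≤ (x : ℕ) := by
  constructor
  · intro hx
    obtain ⟨i, hi, hx⟩ := List.mem_iff_getElem.mp hx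
    rw [drop_getElem hi] at hx
    rw [← hx]
    simp
  · intro hx
    refine List.mem_iff_getElem.mpr ⟨(x : ℕ) - p, by rw [drop_len]; omega, ?_⟩
    rw [drop_getElem]
    exact Fin.ext (by simp; omega)

lemma gammaExt_apply_val (h : (x : ℕ) < p) :
    ((gammaExt p q x : Fin (p + q)) : ℕ) = ((x : ℕ) + 1) % p := by
  have hlt : (x : ℕ) < ((List.finRange (p + q)).take p).length := by rw [take_len]; exact h
  have hxl : ((List.finRange (p + q)).take p)[(x : ℕ)]'hlt = x := by
    rw [take_getElem hlt]
  conv_lhs => rw [gammaExt, ← hxl]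
  rw [List.formPerm_apply_getElem _ take_nodup _ hlt, take_getElem]
  simp [take_len]

lemma gammaExt_fix (h : p ≤ (x : ℕ)) : gammaExt p q x = x :=
  List.formPerm_apply_of_notMem (by rw [mem_take_iff]; omega)

lemma gammaInt_apply_val (h : p ≤ (x : ℕ)) :
    ((gammaInt p q x : Fin (p + q)) : ℕ) = p + (((x : ℕ) - p + 1) % q) := by
  have hlt : (x : ℕ) - p < ((List.finRange (p + q)).drop p).length := by rw [drop_len]; omega
  have hxl : ((List.finRange (p + q)).drop p)[(x : ℕ) - p]'hlt = x := by
    rw [drop_getElem hlt]; exact Fin.ext (by simp; omega)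
  conv_lhs => rw [gammaInt, ← hxl]
  rw [List.formPerm_apply_getElem _ drop_nodup _ hlt, drop_getElem]
  simp [drop_len]

lemma gammaInt_fix (h : (x : ℕ) < p) : gammaInt p q x = x :=
  List.formPerm_apply_of_notMem (by rw [mem_drop_iff]; omega)

end gam

section gam2
open Equiv Function List

variable {p q : ℕ} {x a u v : Fin (p + q)}

lemma gammaInt_int (h : p ≤ (x : ℕ)) : p ≤ ((gammaInt p q x : Fin (p + q)) : ℕ) := by
  rw [gammaInt_apply_val h]; omega

lemma gammaAnn_apply_ext (h : (x : ℕ) < p) : gammaAnn p q x = gammaExt p q x := by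
  rw [gammaAnn, Equiv.Perm.mul_apply, gammaInt_fix h]

lemma gammaAnn_apply_int (h : p ≤ (x : ℕ)) : gammaAnn p q x = gammaInt p q x := by
  rw [gammaAnn, Equiv.Perm.mul_apply, gammaExt_fix (gammaInt_int h)]

lemma gammaAnn_iterate_ext (h : (a : ℕ) < p) (k : ℕ) :
    (((⇑(gammaAnn p q))^[k] a : Fin (p + q)) : ℕ) = ((a : ℕ) + k) % p := by
  have hp : 0 < p := by omega
  induction k with
  | zero => simp [Nat.mod_eq_of_lt h]
  | succ k ih =>
    rw [Function.iterate_succ_apply']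
    have hlt : (((⇑(gammaAnn p q))^[k] a : Fin (p + q)) : ℕ) < p := by
      rw [ih]; exact Nat.mod_lt _ hp
    rw [gammaAnn_apply_ext hlt, gammaExt_apply_val hlt, ih, Nat.mod_add_mod,
      ← Nat.add_assoc]

lemma gammaAnn_iterate_int (h : p ≤ (a : ℕ)) (k : ℕ) :
    (((⇑(gammaAnn p q))^[k] a : Fin (p + q)) : ℕ) = p + (((a : ℕ) - p + k) % q) := by
  have hq : 0 < q := by have := a.2; omega
  induction k with
  | zero => simp [Nat.mod_eq_of_lt (show (a:ℕ) - p < q by have := a.2; omega)]; omega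
  | succ k ih =>
    rw [Function.iterate_succ_apply']
    have hge : p ≤ (((⇑(gammaAnn p q))^[k] a : Fin (p + q)) : ℕ) := by rw [ih]; omega
    rw [gammaAnn_apply_int hge, gammaInt_apply_val hge, ih]
    congr 1
    rw [Nat.add_sub_cancel_left, Nat.mod_add_mod, ← Nat.add_assoc]

lemma gammaAnn_iterate_ext_lt (h : (a : ℕ) < p) (k : ℕ) :
    (((⇑(gammaAnn p q))^[k] a : Fin (p + q)) : ℕ) < p := by
  rw [gammaAnn_iterate_ext h]; exact Nat.mod_lt _ (by omega)

lemma gammaAnn_iterate_int_ge (h : p ≤ (a : ℕ)) (k : ℕ) :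
    p ≤ (((⇑(gammaAnn p q))^[k] a : Fin (p + q)) : ℕ) := by
  rw [gammaAnn_iterate_int h]; omega

lemma gammaExt_iterate_eq (h : (a : ℕ) < p) (k : ℕ) :
    (⇑(gammaExt p q))^[k] a = (⇑(gammaAnn p q))^[k] a := by
  induction k with
  | zero => rfl
  | succ k ih =>
    rw [Function.iterate_succ_apply', Function.iterate_succ_apply', ih,
      gammaAnn_apply_ext (gammaAnn_iterate_ext_lt h k)]

lemma gammaInt_iterate_eq (h : p ≤ (a : ℕ)) (k : ℕ) :
    (⇑(gammaInt p q))^[k] a = (⇑(gammaAnn p q))^[k] a := by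
  induction k with
  | zero => rfl
  | succ k ih =>
    rw [Function.iterate_succ_apply', Function.iterate_succ_apply', ih,
      gammaAnn_apply_int (gammaAnn_iterate_int_ge h k)]

lemma gamma_iterate_pq (hp : 0 < p) (hq : 0 < q) (i : Fin (p + q)) :
    (⇑(gammaAnn p q))^[p * q] i = i := by
  rcases lt_or_ge (i : ℕ) p with h | h
  · exact Fin.ext (by rw [gammaAnn_iterate_ext h, Nat.add_mul_mod_self_left,
      Nat.mod_eq_of_lt h])
  · refine Fin.ext ?_
    rw [gammaAnn_iterate_int h, show (i:ℕ) - p + p * q = (i:ℕ) - p + q * p by ring,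
      Nat.add_mul_mod_self_left,
      Nat.mod_eq_of_lt (show (i:ℕ) - p < q by have := i.2; omega)]
    omega

/-- cyclic distance on the external circle -/
def Dp (p q : ℕ) (u x : Fin (p + q)) : ℕ := ((x : ℕ) + p - (u : ℕ)) % p

/-- cyclic distance on the internal circle -/
def Dq (p q : ℕ) (u x : Fin (p + q)) : ℕ :=
  (((x : ℕ) - p) + q - ((u : ℕ) - p)) % q

lemma modD {p A X : ℕ} (hA : A < p) (hX : X < p) : (A + (X + p - A) % p) % p = X := by
  rcases le_or_gt A X with h | h
  · rw [show X + p - A = (X - A) + p by omega, Nat.add_mod_right,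
      Nat.mod_eq_of_lt (show X - A < p by omega), show A + (X - A) = X by omega,
      Nat.mod_eq_of_lt hX]
  · rw [Nat.mod_eq_of_lt (show X + p - A < p by omega),
      show A + (X + p - A) = X + p by omega, Nat.add_mod_right, Nat.mod_eq_of_lt hX]

lemma modD2 {p A m : ℕ} (hA : A < p) (hm : m < p) : ((A + m) % p + p - A) % p = m := by
  rcases lt_or_ge (A + m) p with h | h
  · rw [Nat.mod_eq_of_lt h, show A + m + p - A = m + p by omega, Nat.add_mod_right,
      Nat.mod_eq_of_lt hm]
  · rw [show A + m = (A + m - p) + p by omega, Nat.add_mod_right,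
      Nat.mod_eq_of_lt (show A + m - p < p by omega),
      show A + m - p + p - A = m by omega, Nat.mod_eq_of_lt hm]

lemma Dp_lt (hp : 0 < p) (u x : Fin (p + q)) : Dp p q u x < p := Nat.mod_lt _ hp

lemma Dq_lt (hq : 0 < q) (u x : Fin (p + q)) : Dq p q u x < q := Nat.mod_lt _ hq

lemma Dp_le (h1 : (u : ℕ) ≤ (x : ℕ)) (h2 : (x : ℕ) < p) :
    Dp p q u x = (x : ℕ) - (u : ℕ) := by
  rw [Dp, show (x:ℕ) + p - u = ((x:ℕ) - u) + p by omega, Nat.add_mod_right,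
    Nat.mod_eq_of_lt (by omega)]

lemma Dp_gt (h1 : (x : ℕ) < (u : ℕ)) (h2 : (u : ℕ) < p) :
    Dp p q u x = (x : ℕ) + p - (u : ℕ) := by
  rw [Dp, Nat.mod_eq_of_lt (by omega)]

lemma iter_hits_ext (hu : (u : ℕ) < p) (hx : (x : ℕ) < p) :
    (⇑(gammaAnn p q))^[Dp p q u x] u = x :=
  Fin.ext (by rw [gammaAnn_iterate_ext hu, Dp, modD hu hx])

lemma iter_hits_int (hu : p ≤ (u : ℕ)) (hx : p ≤ (x : ℕ)) :
    (⇑(gammaAnn p q))^[Dq p q u x] u = x := by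
  have hq : 0 < q := by have := u.2; omega
  refine Fin.ext ?_
  rw [gammaAnn_iterate_int hu, Dq, modD (by have := u.2; omega) (by have := x.2; omega)]
  omega

lemma Dp_pos (hu : (u : ℕ) < p) (hx : (x : ℕ) < p) (hne : x ≠ u) : 0 < Dp p q u x := by
  rcases Nat.eq_zero_or_pos (Dp p q u x) with h | h
  · exfalso
    have := iter_hits_ext (q := q) hu hx
    rw [h] at this
    exact hne this.symm
  · exact h

lemma Dq_pos (hu : p ≤ (u : ℕ)) (hx : p ≤ (x : ℕ)) (hne : x ≠ u) : 0 < Dq p q u x := by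
  rcases Nat.eq_zero_or_pos (Dq p q u x) with h | h
  · exfalso
    have := iter_hits_int (q := q) hu hx
    rw [h] at this
    exact hne this.symm
  · exact h

lemma iter_index_ext {m : ℕ} (hu : (u : ℕ) < p) (hm : m < p)
    (hx : (⇑(gammaAnn p q))^[m] u = x) : Dp p q u x = m := by
  rw [Dp, ← hx, gammaAnn_iterate_ext hu, modD2 hu hm]

lemma iter_index_int {m : ℕ} (hu : p ≤ (u : ℕ)) (hm : m < q)
    (hx : (⇑(gammaAnn p q))^[m] u = x) : Dq p q u x = m := by
  rw [Dq, ← hx, gammaAnn_iterate_int hu, Nat.add_sub_cancel_left,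
    modD2 (by have := u.2; omega) hm]

end gam2

section cyc
open Equiv Function
variable {p q : ℕ} {τ : Equiv.Perm (Fin (p + q))} {S : Set (Fin (p + q))}
  {a b c d u v : Fin (p + q)}

lemma Dq_le' {x : Fin (p + q)} (h0 : p ≤ (u : ℕ)) (h1 : (u : ℕ) ≤ (x : ℕ)) :
    Dq p q u x = (x : ℕ) - (u : ℕ) := by
  have hx := x.2
  have hq : 0 < q := by omega
  rw [Dq, show (x:ℕ) - p + q - ((u:ℕ) - p) = ((x:ℕ) - (u:ℕ)) + q by omega,
    Nat.add_mod_right, Nat.mod_eq_of_lt (by omega)]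

lemma Dq_gt' {x : Fin (p + q)} (h0 : p ≤ (x : ℕ)) (h1 : (x : ℕ) < (u : ℕ)) :
    Dq p q u x = (x : ℕ) + q - (u : ℕ) := by
  have hu := u.2
  rw [Dq, show (x:ℕ) - p + q - ((u:ℕ) - p) = (x:ℕ) + q - (u:ℕ) by omega,
    Nat.mod_eq_of_lt (by omega)]

lemma induced_gamma_eq_ext (hu : (u : ℕ) < p) (hv : (v : ℕ) < p) (hvS : v ∈ S)
    (hne : v ≠ u)
    (hmin : ∀ x ∈ S, x ≠ u → (x : ℕ) < p → Dp p q u v ≤ Dp p q u x) :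
    induced (⇑(gammaAnn p q)) S u = v := by
  rw [← iter_hits_ext (q := q) hu hv]
  refine induced_eq_of (Dp_pos hu hv hne) (by rw [iter_hits_ext hu hv]; exact hvS) ?_
  intro j hj hjm hjS
  have hxp : (((⇑(gammaAnn p q))^[j] u : Fin (p+q)) : ℕ) < p := gammaAnn_iterate_ext_lt hu j
  have hj' : j < p := lt_trans hjm (Dp_lt (by omega) u v)
  have hDx : Dp p q u ((⇑(gammaAnn p q))^[j] u) = j := iter_index_ext hu hj' rfl
  have hxu : (⇑(gammaAnn p q))^[j] u ≠ u := by
    intro h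
    rw [h, Dp_le le_rfl hu] at hDx
    omega
  have := hmin _ hjS hxu hxp
  omega

lemma induced_gamma_eq_int (hu : p ≤ (u : ℕ)) (hv : p ≤ (v : ℕ)) (hvS : v ∈ S)
    (hne : v ≠ u)
    (hmin : ∀ x ∈ S, x ≠ u → p ≤ (x : ℕ) → Dq p q u v ≤ Dq p q u x) :
    induced (⇑(gammaAnn p q)) S u = v := by
  have hq : 0 < q := by have := u.2; omega
  rw [← iter_hits_int (q := q) hu hv]
  refine induced_eq_of (Dq_pos hu hv hne) (by rw [iter_hits_int hu hv]; exact hvS) ?_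
  intro j hj hjm hjS
  have hxp : p ≤ (((⇑(gammaAnn p q))^[j] u : Fin (p+q)) : ℕ) := gammaAnn_iterate_int_ge hu j
  have hj' : j < q := lt_trans hjm (Dq_lt hq u v)
  have hDx : Dq p q u ((⇑(gammaAnn p q))^[j] u) = j := iter_index_int hu hj' rfl
  have hxu : (⇑(gammaAnn p q))^[j] u ≠ u := by
    intro h
    rw [h, Dq_le' hu le_rfl] at hDx
    omega
  have := hmin _ hjS hxu hxp
  omega

lemma mapsCyc4_gamma_ext (h1 : (a : ℕ) < (b : ℕ)) (h2 : (b : ℕ) < (c : ℕ))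
    (h3 : (c : ℕ) < (d : ℕ)) (h4 : (d : ℕ) < p) :
    MapsCyc4 (⇑(gammaAnn p q)) {a, b, c, d} a b c d := by
  have ha : (a : ℕ) < p := by omega
  have hb : (b : ℕ) < p := by omega
  have hc : (c : ℕ) < p := by omega
  refine ⟨?_, ?_, ?_, ?_⟩
  · refine induced_gamma_eq_ext ha hb (by simp) (Fin.ne_of_val_ne (by omega)) ?_
    intro x hx hxu hxp
    simp only [Set.mem_insert_iff, Set.mem_singleton_iff] at hx
    rcases hx with rfl | rfl | rfl | rfl
    · exact absurd rfl hxu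
    · rfl
    · rw [Dp_le (by omega) hb, Dp_le (by omega) hc]; omega
    · rw [Dp_le (by omega) hb, Dp_le (by omega) h4]; omega
  · refine induced_gamma_eq_ext hb hc (by simp) (Fin.ne_of_val_ne (by omega)) ?_
    intro x hx hxu hxp
    simp only [Set.mem_insert_iff, Set.mem_singleton_iff] at hx
    rcases hx with rfl | rfl | rfl | rfl
    · rw [Dp_le (by omega) hc, Dp_gt (by omega) hb]; omega
    · exact absurd rfl hxu
    · rfl
    · rw [Dp_le (by omega) hc, Dp_le (by omega) h4]; omega
  · refine induced_gamma_eq_ext hc h4 (by simp) (Fin.ne_of_val_ne (by omega)) ?_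
    intro x hx hxu hxp
    simp only [Set.mem_insert_iff, Set.mem_singleton_iff] at hx
    rcases hx with rfl | rfl | rfl | rfl
    · rw [Dp_le (by omega) h4, Dp_gt (by omega) hc]; omega
    · rw [Dp_le (by omega) h4, Dp_gt (by omega) hc]; omega
    · exact absurd rfl hxu
    · rfl
  · refine induced_gamma_eq_ext h4 ha (by simp) (Fin.ne_of_val_ne (by omega)) ?_
    intro x hx hxu hxp
    simp only [Set.mem_insert_iff, Set.mem_singleton_iff] at hx
    rcases hx with rfl | rfl | rfl | rfl
    · rfl
    · rw [Dp_gt (by omega) h4, Dp_gt (by omega) h4]; omega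
    · rw [Dp_gt (by omega) h4, Dp_gt (by omega) h4]; omega
    · exact absurd rfl hxu

lemma mapsCyc4_gamma_int (h0 : p ≤ (a : ℕ)) (h1 : (a : ℕ) < (b : ℕ))
    (h2 : (b : ℕ) < (c : ℕ)) (h3 : (c : ℕ) < (d : ℕ)) :
    MapsCyc4 (⇑(gammaAnn p q)) {a, b, c, d} a b c d := by
  have hb : p ≤ (b : ℕ) := by omega
  have hc : p ≤ (c : ℕ) := by omega
  have hd : p ≤ (d : ℕ) := by omega
  have hdq := d.2
  refine ⟨?_, ?_, ?_, ?_⟩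
  · refine induced_gamma_eq_int h0 hb (by simp) (Fin.ne_of_val_ne (by omega)) ?_
    intro x hx hxu hxp
    simp only [Set.mem_insert_iff, Set.mem_singleton_iff] at hx
    rcases hx with rfl | rfl | rfl | rfl
    · exact absurd rfl hxu
    · rfl
    · rw [Dq_le' h0 (by omega), Dq_le' h0 (by omega)]; omega
    · rw [Dq_le' h0 (by omega), Dq_le' h0 (by omega)]; omega
  · refine induced_gamma_eq_int hb hc (by simp) (Fin.ne_of_val_ne (by omega)) ?_
    intro x hx hxu hxp
    simp only [Set.mem_insert_iff, Set.mem_singleton_iff] at hx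
    rcases hx with rfl | rfl | rfl | rfl
    · rw [Dq_le' hb (by omega), Dq_gt' h0 (by omega)]; omega
    · exact absurd rfl hxu
    · rfl
    · rw [Dq_le' hb (by omega), Dq_le' hb (by omega)]; omega
  · refine induced_gamma_eq_int hc hd (by simp) (Fin.ne_of_val_ne (by omega)) ?_
    intro x hx hxu hxp
    simp only [Set.mem_insert_iff, Set.mem_singleton_iff] at hx
    rcases hx with rfl | rfl | rfl | rfl
    · rw [Dq_le' hc (by omega), Dq_gt' h0 (by omega)]; omega
    · rw [Dq_le' hc (by omega), Dq_gt' hb (by omega)]; omega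
    · exact absurd rfl hxu
    · rfl
  · refine induced_gamma_eq_int hd h0 (by simp) (Fin.ne_of_val_ne (by omega)) ?_
    intro x hx hxu hxp
    simp only [Set.mem_insert_iff, Set.mem_singleton_iff] at hx
    rcases hx with rfl | rfl | rfl | rfl
    · rfl
    · rw [Dq_gt' h0 (by omega), Dq_gt' hb (by omega)]; omega
    · rw [Dq_gt' h0 (by omega), Dq_gt' hc (by omega)]; omega
    · exact absurd rfl hxu

end cyc

section ac1
open Equiv Function
variable {p q : ℕ} {τ : Equiv.Perm (Fin (p + q))} {S : Set (Fin (p + q))}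
  {a b c d u v : Fin (p + q)}

lemma induced_gamma_side_ext (hu : (u : ℕ) < p) :
    induced (⇑(gammaAnn p q)) S u = u ∨
      ((induced (⇑(gammaAnn p q)) S u : Fin (p + q)) : ℕ) < p := by
  by_cases h : ∃ k, 0 < k ∧ (⇑(gammaAnn p q))^[k] u ∈ S
  · obtain ⟨m, _, _, heq, _⟩ := induced_spec h
    right; rw [heq]; exact gammaAnn_iterate_ext_lt hu m
  · left; exact induced_of_not_exists h

lemma induced_gamma_side_int (hu : p ≤ (u : ℕ)) :
    induced (⇑(gammaAnn p q)) S u = u ∨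
      p ≤ ((induced (⇑(gammaAnn p q)) S u : Fin (p + q)) : ℕ) := by
  by_cases h : ∃ k, 0 < k ∧ (⇑(gammaAnn p q))^[k] u ∈ S
  · obtain ⟨m, _, _, heq, _⟩ := induced_spec h
    right; rw [heq]; exact gammaAnn_iterate_int_ge hu m
  · left; exact induced_of_not_exists h

lemma cyc4_same_side (hab : a ≠ b) (hbc : b ≠ c) (hcd : c ≠ d) (hda : d ≠ a)
    (h : MapsCyc4 (⇑(gammaAnn p q)) S a b c d) :
    ((a : ℕ) < p ∧ (b : ℕ) < p ∧ (c : ℕ) < p ∧ (d : ℕ) < p) ∨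
      (p ≤ (a : ℕ) ∧ p ≤ (b : ℕ) ∧ p ≤ (c : ℕ) ∧ p ≤ (d : ℕ)) := by
  rcases lt_or_ge (a : ℕ) p with ha | ha
  · left
    have hb : (b : ℕ) < p := by
      rcases induced_gamma_side_ext (S := S) ha with h' | h'
      · rw [h.1] at h'; exact absurd h'.symm hab
      · rwa [h.1] at h'
    have hc : (c : ℕ) < p := by
      rcases induced_gamma_side_ext (S := S) hb with h' | h'
      · rw [h.2.1] at h'; exact absurd h'.symm hbc
      · rwa [h.2.1] at h'
    have hd : (d : ℕ) < p := by
      rcases induced_gamma_side_ext (S := S) hc with h' | h'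
      · rw [h.2.2.1] at h'; exact absurd h'.symm hcd
      · rwa [h.2.2.1] at h'
    exact ⟨ha, hb, hc, hd⟩
  · right
    have hb : p ≤ (b : ℕ) := by
      rcases induced_gamma_side_int (S := S) ha with h' | h'
      · rw [h.1] at h'; exact absurd h'.symm hab
      · rwa [h.1] at h'
    have hc : p ≤ (c : ℕ) := by
      rcases induced_gamma_side_int (S := S) hb with h' | h'
      · rw [h.2.1] at h'; exact absurd h'.symm hbc
      · rwa [h.2.1] at h'
    have hd : p ≤ (d : ℕ) := by
      rcases induced_gamma_side_int (S := S) hc with h' | h'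
      · rw [h.2.2.1] at h'; exact absurd h'.symm hcd
      · rwa [h.2.2.1] at h'
    exact ⟨ha, hb, hc, hd⟩

lemma dp_strict (hu : (u : ℕ) < p) (hv : (v : ℕ) < p) {w : Fin (p + q)}
    (hw : (w : ℕ) < p) (hvS : v ∈ S) (hvu : v ≠ u) (hwu : w ≠ u) (hwv : w ≠ v)
    (hind : induced (⇑(gammaAnn p q)) S u = v) (hwS : w ∈ S) :
    Dp p q u v < Dp p q u w := by
  obtain ⟨m, hm, hmS, heq, hmin⟩ := induced_spec
    ⟨Dp p q u v, Dp_pos hu hv hvu, by rw [iter_hits_ext hu hv]; exact hvS⟩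
  have hmle : m ≤ Dp p q u v :=
    hmin _ (Dp_pos hu hv hvu) (by rw [iter_hits_ext hu hv]; exact hvS)
  have hmp : m < p := lt_of_le_of_lt hmle (Dp_lt (by omega) u v)
  have hDv : Dp p q u v = m := iter_index_ext hu hmp (by rw [← heq, hind])
  have hge : m ≤ Dp p q u w :=
    hmin _ (Dp_pos hu hw hwu) (by rw [iter_hits_ext hu hw]; exact hwS)
  have hne : Dp p q u w ≠ m := by
    intro h
    have h2 := iter_hits_ext (q := q) hu hw
    rw [h, ← heq, hind] at h2
    exact hwv h2.symm
  omega

lemma dq_strict (hu : p ≤ (u : ℕ)) (hv : p ≤ (v : ℕ)) {w : Fin (p + q)}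
    (hw : p ≤ (w : ℕ)) (hvS : v ∈ S) (hvu : v ≠ u) (hwu : w ≠ u) (hwv : w ≠ v)
    (hind : induced (⇑(gammaAnn p q)) S u = v) (hwS : w ∈ S) :
    Dq p q u v < Dq p q u w := by
  have hq : 0 < q := by have := u.2; omega
  obtain ⟨m, hm, hmS, heq, hmin⟩ := induced_spec
    ⟨Dq p q u v, Dq_pos hu hv hvu, by rw [iter_hits_int hu hv]; exact hvS⟩
  have hmle : m ≤ Dq p q u v :=
    hmin _ (Dq_pos hu hv hvu) (by rw [iter_hits_int hu hv]; exact hvS)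
  have hmp : m < q := lt_of_le_of_lt hmle (Dq_lt hq u v)
  have hDv : Dq p q u v = m := iter_index_int hu hmp (by rw [← heq, hind])
  have hge : m ≤ Dq p q u w :=
    hmin _ (Dq_pos hu hw hwu) (by rw [iter_hits_int hu hw]; exact hwS)
  have hne : Dq p q u w ≠ m := by
    intro h
    have h2 := iter_hits_int (q := q) hu hw
    rw [h, ← heq, hind] at h2
    exact hwv h2.symm
  omega

lemma cyc4_order_ext (hab : a ≠ b) (hac : a ≠ c) (had : a ≠ d) (hbc : b ≠ c)
    (hbd : b ≠ d) (hcd : c ≠ d)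
    (hmS : a ∈ S ∧ b ∈ S ∧ c ∈ S ∧ d ∈ S)
    (ha : (a : ℕ) < p) (hb : (b : ℕ) < p) (hc : (c : ℕ) < p) (hd : (d : ℕ) < p)
    (hmina : (a : ℕ) ≤ (b : ℕ) ∧ (a : ℕ) ≤ (c : ℕ) ∧ (a : ℕ) ≤ (d : ℕ))
    (h4 : MapsCyc4 (⇑(gammaAnn p q)) S a b c d) :
    (a : ℕ) < (b : ℕ) ∧ (b : ℕ) < (c : ℕ) ∧ (c : ℕ) < (d : ℕ) := by
  have d1 : Dp p q a b < Dp p q a c :=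
    dp_strict ha hb hc hmS.2.1 (Ne.symm hab) (Ne.symm hac) (Ne.symm hbc) h4.1 hmS.2.2.1
  have d2 : Dp p q a b < Dp p q a d :=
    dp_strict ha hb hd hmS.2.1 (Ne.symm hab) (Ne.symm had) (Ne.symm hbd) h4.1 hmS.2.2.2
  have d3 : Dp p q b c < Dp p q b d :=
    dp_strict hb hc hd hmS.2.2.1 hbc.symm hbd.symm hcd.symm h4.2.1 hmS.2.2.2
  have vab : (a : ℕ) ≠ (b : ℕ) := fun h => hab (Fin.ext h)
  have vac : (a : ℕ) ≠ (c : ℕ) := fun h => hac (Fin.ext h)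
  have vad : (a : ℕ) ≠ (d : ℕ) := fun h => had (Fin.ext h)
  have o1 : (a : ℕ) < (b : ℕ) := by omega
  rw [Dp_le (by omega) hb, Dp_le (by omega) hc] at d1
  rw [Dp_le (by omega) hb, Dp_le (by omega) hd] at d2
  have o2 : (b : ℕ) < (c : ℕ) := by omega
  rw [Dp_le (by omega) hc, Dp_le (by omega) hd] at d3
  exact ⟨o1, o2, by omega⟩

lemma cyc4_order_int (hab : a ≠ b) (hac : a ≠ c) (had : a ≠ d) (hbc : b ≠ c)
    (hbd : b ≠ d) (hcd : c ≠ d)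
    (hmS : a ∈ S ∧ b ∈ S ∧ c ∈ S ∧ d ∈ S)
    (ha : p ≤ (a : ℕ)) (hb : p ≤ (b : ℕ)) (hc : p ≤ (c : ℕ)) (hd : p ≤ (d : ℕ))
    (hmina : (a : ℕ) ≤ (b : ℕ) ∧ (a : ℕ) ≤ (c : ℕ) ∧ (a : ℕ) ≤ (d : ℕ))
    (h4 : MapsCyc4 (⇑(gammaAnn p q)) S a b c d) :
    (a : ℕ) < (b : ℕ) ∧ (b : ℕ) < (c : ℕ) ∧ (c : ℕ) < (d : ℕ) := by
  have d1 : Dq p q a b < Dq p q a c :=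
    dq_strict ha hb hc hmS.2.1 (Ne.symm hab) (Ne.symm hac) (Ne.symm hbc) h4.1 hmS.2.2.1
  have d2 : Dq p q a b < Dq p q a d :=
    dq_strict ha hb hd hmS.2.1 (Ne.symm hab) (Ne.symm had) (Ne.symm hbd) h4.1 hmS.2.2.2
  have d3 : Dq p q b c < Dq p q b d :=
    dq_strict hb hc hd hmS.2.2.1 hbc.symm hbd.symm hcd.symm h4.2.1 hmS.2.2.2
  have vab : (a : ℕ) ≠ (b : ℕ) := fun h => hab (Fin.ext h)
  have vac : (a : ℕ) ≠ (c : ℕ) := fun h => hac (Fin.ext h)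
  have vad : (a : ℕ) ≠ (d : ℕ) := fun h => had (Fin.ext h)
  have o1 : (a : ℕ) < (b : ℕ) := by omega
  rw [Dq_le' ha (by omega), Dq_le' ha (by omega)] at d1
  rw [Dq_le' ha (by omega), Dq_le' ha (by omega)] at d2
  have o2 : (b : ℕ) < (c : ℕ) := by omega
  rw [Dq_le' hb (by omega), Dq_le' hb (by omega)] at d3
  exact ⟨o1, o2, by omega⟩

end ac1

section ac2
open Equiv Function
variable {p q : ℕ} {τ : Equiv.Perm (Fin (p + q))} {a b c d : Fin (p + q)}

lemma swap2_sameCycle {S : Set (Fin (p + q))}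
    (hmS : a ∈ S ∧ b ∈ S ∧ c ∈ S ∧ d ∈ S)
    (hab : a ≠ b) (hbc : b ≠ c)
    (hsw : MapsSwap2 (⇑τ) S a b c d) :
    τ.SameCycle a c ∧ τ.SameCycle b d ∧ ¬ τ.SameCycle a b := by
  refine ⟨?_, ?_, ?_⟩
  · have := sameCycle_induced (τ := τ) hmS.1
    rwa [hsw.1] at this
  · have := sameCycle_induced (τ := τ) hmS.2.1
    rwa [hsw.2.2.1] at this
  · exact not_sameCycle_of_swap hmS.1 hmS.2.1 hmS.2.2.1 hab.symm hbc hsw.1 hsw.2.1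

lemma ac1_of_crossing (h1 : (a : ℕ) < (b : ℕ)) (h2 : (b : ℕ) < (c : ℕ))
    (h3 : (c : ℕ) < (d : ℕ)) (hside : (d : ℕ) < p ∨ p ≤ (a : ℕ))
    (hac : τ.SameCycle a c) (hbd : τ.SameCycle b d) (hnab : ¬ τ.SameCycle a b) :
    AC1 p q τ := by
  have hab : a ≠ b := Fin.ne_of_val_ne (by omega)
  have hac' : a ≠ c := Fin.ne_of_val_ne (by omega)
  have had : a ≠ d := Fin.ne_of_val_ne (by omega)
  have hbc : b ≠ c := Fin.ne_of_val_ne (by omega)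
  have hbd' : b ≠ d := Fin.ne_of_val_ne (by omega)
  have hcd : c ≠ d := Fin.ne_of_val_ne (by omega)
  refine ⟨a, b, c, d, ?_, ?_, ?_⟩
  · simp [List.pairwise_cons, hab, hac', had, hbc, hbd', hcd]
  · rcases hside with h | h
    · exact mapsCyc4_gamma_ext h1 h2 h3 h
    · exact mapsCyc4_gamma_int h h1 h2 h3
  · have mema : a ∈ ({a, b, c, d} : Set (Fin (p + q))) := by simp
    have memb : b ∈ ({a, b, c, d} : Set (Fin (p + q))) := by simp
    have memc : c ∈ ({a, b, c, d} : Set (Fin (p + q))) := by simp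
    have memd : d ∈ ({a, b, c, d} : Set (Fin (p + q))) := by simp
    refine ⟨?_, ?_, ?_, ?_⟩
    · refine induced_eq_of_orbit mema memc hac'.symm hac ?_
      intro z hz hsz
      simp only [Set.mem_insert_iff, Set.mem_singleton_iff] at hz
      rcases hz with rfl | rfl | rfl | rfl
      · exact Or.inl rfl
      · exact absurd hsz hnab
      · exact Or.inr rfl
      · exact absurd (hsz.trans hbd.symm) hnab
    · refine induced_eq_of_orbit memc mema hac' hac.symm ?_
      intro z hz hsz
      simp only [Set.mem_insert_iff, Set.mem_singleton_iff] at hz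
      rcases hz with rfl | rfl | rfl | rfl
      · exact Or.inr rfl
      · exact absurd (hac.trans hsz) hnab
      · exact Or.inl rfl
      · exact absurd ((hac.trans hsz).trans hbd.symm) hnab
    · refine induced_eq_of_orbit memb memd hbd'.symm hbd ?_
      intro z hz hsz
      simp only [Set.mem_insert_iff, Set.mem_singleton_iff] at hz
      rcases hz with rfl | rfl | rfl | rfl
      · exact absurd hsz.symm hnab
      · exact Or.inl rfl
      · exact absurd (hac.trans hsz.symm) hnab
      · exact Or.inr rfl
    · refine induced_eq_of_orbit memd memb hbd' hbd.symm ?_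
      intro z hz hsz
      simp only [Set.mem_insert_iff, Set.mem_singleton_iff] at hz
      rcases hz with rfl | rfl | rfl | rfl
      · exact absurd (hbd.trans hsz).symm hnab
      · exact Or.inr rfl
      · exact absurd ((hbd.trans hsz).trans hac.symm).symm hnab
      · exact Or.inl rfl

lemma ac1_core {S : Set (Fin (p + q))}
    (hmS : a ∈ S ∧ b ∈ S ∧ c ∈ S ∧ d ∈ S)
    (hab : a ≠ b) (hac : a ≠ c) (had : a ≠ d) (hbc : b ≠ c) (hbd : b ≠ d) (hcd : c ≠ d)
    (hside : ((a : ℕ) < p ∧ (b : ℕ) < p ∧ (c : ℕ) < p ∧ (d : ℕ) < p) ∨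
      (p ≤ (a : ℕ) ∧ p ≤ (b : ℕ) ∧ p ≤ (c : ℕ) ∧ p ≤ (d : ℕ)))
    (hmina : (a : ℕ) ≤ (b : ℕ) ∧ (a : ℕ) ≤ (c : ℕ) ∧ (a : ℕ) ≤ (d : ℕ))
    (h4 : MapsCyc4 (⇑(gammaAnn p q)) S a b c d)
    (hsw : MapsSwap2 (⇑τ) S a b c d) :
    ∃ a b c d : Fin (p + q), (a : ℕ) < (b : ℕ) ∧ (b : ℕ) < (c : ℕ) ∧
      (c : ℕ) < (d : ℕ) ∧ ((d : ℕ) < p ∨ p ≤ (a : ℕ)) ∧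
      τ.SameCycle a c ∧ τ.SameCycle b d ∧ ¬ τ.SameCycle a b := by
  obtain ⟨hsc1, hsc2, hsc3⟩ := swap2_sameCycle hmS hab hbc hsw
  rcases hside with ⟨ha, hb, hc, hd⟩ | ⟨ha, hb, hc, hd⟩
  · obtain ⟨o1, o2, o3⟩ := cyc4_order_ext hab hac had hbc hbd hcd hmS ha hb hc hd hmina h4
    exact ⟨a, b, c, d, o1, o2, o3, Or.inl hd, hsc1, hsc2, hsc3⟩
  · obtain ⟨o1, o2, o3⟩ := cyc4_order_int hab hac had hbc hbd hcd hmS ha hb hc hd hmina h4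
    exact ⟨a, b, c, d, o1, o2, o3, Or.inr ha, hsc1, hsc2, hsc3⟩

lemma crossing_of_ac1 (h : AC1 p q τ) :
    ∃ a b c d : Fin (p + q), (a : ℕ) < (b : ℕ) ∧ (b : ℕ) < (c : ℕ) ∧
      (c : ℕ) < (d : ℕ) ∧ ((d : ℕ) < p ∨ p ≤ (a : ℕ)) ∧
      τ.SameCycle a c ∧ τ.SameCycle b d ∧ ¬ τ.SameCycle a b := by
  obtain ⟨a, b, c, d, hpw, h4, hsw⟩ := h
  obtain ⟨h1, hpw2⟩ := List.pairwise_cons.mp hpw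
  obtain ⟨h2, hpw3⟩ := List.pairwise_cons.mp hpw2
  obtain ⟨h3, _⟩ := List.pairwise_cons.mp hpw3
  have hab : a ≠ b := h1 b (by simp)
  have hac : a ≠ c := h1 c (by simp)
  have had : a ≠ d := h1 d (by simp)
  have hbc : b ≠ c := h2 c (by simp)
  have hbd : b ≠ d := h2 d (by simp)
  have hcd : c ≠ d := h3 d (by simp)
  have hmS : a ∈ ({a, b, c, d} : Set (Fin (p + q))) ∧
      b ∈ ({a, b, c, d} : Set (Fin (p + q))) ∧
      c ∈ ({a, b, c, d} : Set (Fin (p + q))) ∧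
      d ∈ ({a, b, c, d} : Set (Fin (p + q))) := by
    refine ⟨by simp, by simp, by simp, by simp⟩
  have hside := cyc4_same_side hab hbc hcd had.symm h4
  have hside' : ∀ x : Fin (p + q), x = a ∨ x = b ∨ x = c ∨ x = d →
      (((a : ℕ) < p ∧ (b : ℕ) < p ∧ (c : ℕ) < p ∧ (d : ℕ) < p) →
        ((x : ℕ) < p)) := by
    rintro x (rfl | rfl | rfl | rfl) ⟨_, _, _, _⟩ <;> assumption
  have hmin : ((a : ℕ) ≤ b ∧ (a : ℕ) ≤ c ∧ (a : ℕ) ≤ d) ∨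
      ((b : ℕ) ≤ a ∧ (b : ℕ) ≤ c ∧ (b : ℕ) ≤ d) ∨
      ((c : ℕ) ≤ a ∧ (c : ℕ) ≤ b ∧ (c : ℕ) ≤ d) ∨
      ((d : ℕ) ≤ a ∧ (d : ℕ) ≤ b ∧ (d : ℕ) ≤ c) := by omega
  have hmS1 := hmS.1
  have hmS2 := hmS.2.1
  have hmS3 := hmS.2.2.1
  have hmS4 := hmS.2.2.2
  rcases hmin with hm | hm | hm | hm
  · exact ac1_core hmS hab hac had hbc hbd hcd hside hm h4 hsw
  · refine ac1_core ⟨hmS2, hmS3, hmS4, hmS1⟩ hbc hbd hab.symm hcd hac.symm had.symm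
      ?_ ⟨hm.2.1, hm.2.2, hm.1⟩ ⟨h4.2.1, h4.2.2.1, h4.2.2.2, h4.1⟩ ⟨hsw.2.2.1, hsw.2.2.2, hsw.2.1, hsw.1⟩
    rcases hside with ⟨x1, x2, x3, x4⟩ | ⟨x1, x2, x3, x4⟩
    · exact Or.inl ⟨x2, x3, x4, x1⟩
    · exact Or.inr ⟨x2, x3, x4, x1⟩
  · refine ac1_core ⟨hmS3, hmS4, hmS1, hmS2⟩ hcd hac.symm hbc.symm had.symm hbd.symm hab
      ?_ ⟨hm.2.2, hm.1, hm.2.1⟩ ⟨h4.2.2.1, h4.2.2.2, h4.1, h4.2.1⟩ ⟨hsw.2.1, hsw.1, hsw.2.2.2, hsw.2.2.1⟩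
    rcases hside with ⟨x1, x2, x3, x4⟩ | ⟨x1, x2, x3, x4⟩
    · exact Or.inl ⟨x3, x4, x1, x2⟩
    · exact Or.inr ⟨x3, x4, x1, x2⟩
  · refine ac1_core ⟨hmS4, hmS1, hmS2, hmS3⟩ had.symm hbd.symm hcd.symm hab hac hbc
      ?_ hm ⟨h4.2.2.2, h4.1, h4.2.1, h4.2.2.1⟩ ⟨hsw.2.2.2, hsw.2.2.1, hsw.1, hsw.2.1⟩
    rcases hside with ⟨x1, x2, x3, x4⟩ | ⟨x1, x2, x3, x4⟩
    · exact Or.inl ⟨x4, x1, x2, x3⟩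
    · exact Or.inr ⟨x4, x1, x2, x3⟩

end ac2

section constr
open Equiv Function

lemma exists_std_perm {p q : ℕ} (hp : 0 < p) (hq : 0 < q)
    (π : Set (Set (Fin (p + q)))) (hpart : Setoid.IsPartition π)
    (hnoconn : ∀ B ∈ π, ¬ ConnectingBlock p q B) :
    ∃ τ : Equiv.Perm (Fin (p + q)), {A | IsOrbit τ A} = π ∧ AnnStandard p q τ := by
  classical
  choose blk hblk using hpart.2
  have hblkmem : ∀ i, blk i ∈ π := fun i => (hblk i).1.1
  have hblkself : ∀ i, i ∈ blk i := fun i => (hblk i).1.2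
  have hblkuniq : ∀ (i : Fin (p + q)) B, B ∈ π → i ∈ B → B = blk i :=
    fun i B h1 h2 => (hblk i).2 B ⟨h1, h2⟩
  set γ := gammaAnn p q with hγ
  have hret : ∀ i : Fin (p + q), ∃ k, 0 < k ∧ (⇑γ)^[k] i ∈ blk i := fun i =>
    ⟨p * q, by positivity, by rw [hγ, gamma_iterate_pq hp hq]; exact hblkself i⟩
  set f : Fin (p + q) → Fin (p + q) := fun i => induced (⇑γ) (blk i) i with hf
  have hfspec : ∀ i, ∃ m, 0 < m ∧ (⇑γ)^[m] i ∈ blk i ∧ f i = (⇑γ)^[m] i ∧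
      (∀ j, 0 < j → (⇑γ)^[j] i ∈ blk i → m ≤ j) := fun i => by
    obtain ⟨m, h1, h2, h3, h4⟩ := induced_spec (hret i)
    exact ⟨m, h1, h2, h3, h4⟩
  have hfmem : ∀ i, f i ∈ blk i := by
    intro i; obtain ⟨m, _, h2, h3, _⟩ := hfspec i; rw [h3]; exact h2
  have hblkf : ∀ i, blk i = blk (f i) := fun i =>
    hblkuniq (f i) (blk i) (hblkmem i) (hfmem i)
  have hinj : Function.Injective f := by
    have key : ∀ (i j : Fin (p + q)) (mi mj : ℕ), 0 < mi → mi ≤ mj → blk i = blk j →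
        (∀ jj, 0 < jj → (⇑γ)^[jj] j ∈ blk j → mj ≤ jj) →
        (⇑γ)^[mi] i = (⇑γ)^[mj] j → i = j := by
      intro i j mi mj hmi0 hle hblkij hminJ heq
      have h1 : (⇑γ)^[mi] i = (⇑γ)^[mi] ((⇑γ)^[mj - mi] j) := by
        rw [← Function.iterate_add_apply, Nat.add_sub_cancel' hle, heq]
      have h2 : i = (⇑γ)^[mj - mi] j :=
        Function.Injective.iterate γ.injective mi h1
      rcases Nat.eq_zero_or_pos (mj - mi) with h3 | h3
      · rw [h2, h3]; rfl
      · exfalso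
        have h4 : (⇑γ)^[mj - mi] j ∈ blk j := by
          rw [← h2, ← hblkij]; exact hblkself i
        have := hminJ (mj - mi) h3 h4
        omega
    intro i j hij
    obtain ⟨mi, hmi, hmiB, hfi, hminI⟩ := hfspec i
    obtain ⟨mj, hmj, hmjB, hfj, hminJ⟩ := hfspec j
    have hblkij : blk i = blk j := by
      rw [hblkf i, hblkf j, hij]
    have heq : (⇑γ)^[mi] i = (⇑γ)^[mj] j := by rw [← hfi, ← hfj, hij]
    rcases le_total mi mj with hle | hle
    · exact key i j mi mj hmi hle hblkij hminJ heq
    · exact (key j i mj mi hmj hle hblkij.symm hminI heq.symm).symm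
  set τ : Equiv.Perm (Fin (p + q)) := Equiv.ofBijective f
    (Finite.injective_iff_bijective.mp hinj) with hτdef
  have hτap : ∀ x, τ x = f x := fun x => rfl
  have hstay : ∀ (w : Fin (p + q)) (k : ℕ), (⇑τ)^[k] w ∈ blk w := by
    intro w k
    induction k with
    | zero => exact hblkself w
    | succ k ih =>
      rw [Function.iterate_succ_apply']
      have h1 : blk w = blk ((⇑τ)^[k] w) := hblkuniq _ _ (hblkmem w) ih
      rw [hτap, h1]
      exact hfmem _
  have horb1 : ∀ w z, τ.SameCycle w z → z ∈ blk w := by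
    intro w z hsc
    rcases eq_or_ne z w with heq | hne
    · rw [heq]; exact hblkself w
    · obtain ⟨k, _, hkz⟩ := exists_pos_iterate_of_sameCycle hsc hne
      rw [← hkz]; exact hstay w k
  have horb2 : ∀ w z, z ∈ blk w → τ.SameCycle w z := by
    intro w z hz
    have hsidewz : ((w : ℕ) < p ∧ (z : ℕ) < p) ∨ (p ≤ (w : ℕ) ∧ p ≤ (z : ℕ)) := by
      rcases lt_or_ge (w : ℕ) p with h | h
      · refine Or.inl ⟨h, ?_⟩
        by_contra hzp
        exact hnoconn (blk w) (hblkmem w)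
          ⟨⟨w, hblkself w, h⟩, ⟨z, hz, (show p ≤ (z:ℕ) by omega)⟩⟩
      · refine Or.inr ⟨h, ?_⟩
        by_contra hzp
        exact hnoconn (blk w) (hblkmem w)
          ⟨⟨z, hz, (show (z:ℕ) < p by omega)⟩, ⟨w, hblkself w, h⟩⟩
    obtain ⟨k, hkz⟩ : ∃ k, (⇑γ)^[k] w = z := by
      rcases hsidewz with ⟨h1, h2⟩ | ⟨h1, h2⟩
      · exact ⟨Dp p q w z, iter_hits_ext h1 h2⟩
      · exact ⟨Dq p q w z, iter_hits_int h1 h2⟩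
    have claim : ∀ k, (⇑γ)^[k] w ∈ blk w → τ.SameCycle w ((⇑γ)^[k] w) := by
      intro k
      induction k using Nat.strong_induction_on with
      | _ k IH =>
        intro hkmem
        rcases Nat.eq_zero_or_pos k with rfl | hkpos
        · exact Equiv.Perm.SameCycle.refl τ w
        · have hne0 : ((Finset.range k).filter
              (fun j => (⇑γ)^[j] w ∈ blk w)).Nonempty :=
            ⟨0, by
              simp only [Finset.mem_filter, Finset.mem_range]
              exact ⟨hkpos, hblkself w⟩⟩
          set k' := ((Finset.range k).filter
            (fun j => (⇑γ)^[j] w ∈ blk w)).max' hne0 with hk'def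
          have hk'mem := Finset.max'_mem _ hne0
          rw [← hk'def] at hk'mem
          simp only [Finset.mem_filter, Finset.mem_range] at hk'mem
          have hmax : ∀ j, j < k → (⇑γ)^[j] w ∈ blk w → j ≤ k' := fun j h1 h2 =>
            Finset.le_max' _ j (by
              simp only [Finset.mem_filter, Finset.mem_range]
              exact ⟨h1, h2⟩)
          have hIH := IH k' hk'mem.1 hk'mem.2
          have hblkz' : blk w = blk ((⇑γ)^[k'] w) :=
            hblkuniq _ _ (hblkmem w) hk'mem.2
          obtain ⟨m, hm, hmB, hfz, hmin⟩ := hfspec ((⇑γ)^[k'] w)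
          have hiter : ∀ t, (⇑γ)^[t] ((⇑γ)^[k'] w) = (⇑γ)^[t + k'] w := fun t => by
            rw [Function.iterate_add_apply]
          have hk'k : k' < k := hk'mem.1
          have hhit : (⇑γ)^[k - k'] ((⇑γ)^[k'] w) ∈ blk ((⇑γ)^[k'] w) := by
            rw [hiter, Nat.sub_add_cancel hk'k.le, ← hblkz']
            exact hkmem
          have hmle : m ≤ k - k' := hmin _ (by omega) hhit
          have hmeq : m = k - k' := by
            by_contra hne
            have hlt : m < k - k' := by omega
            have hmem2 : (⇑γ)^[m + k'] w ∈ blk w := by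
              rw [← hiter, hblkz']; exact hmB
            have := hmax (m + k') (by omega) hmem2
            omega
          have hfz' : τ ((⇑γ)^[k'] w) = (⇑γ)^[k] w := by
            rw [hτap, hfz, hmeq, hiter, Nat.sub_add_cancel hk'k.le]
          refine hIH.trans ?_
          rw [← hfz']
          exact ⟨1, by simp⟩
    rw [← hkz]
    exact claim k (by rw [hkz]; exact hz)
  have horb : ∀ w, {z | τ.SameCycle w z} = blk w := fun w =>
    Set.ext fun z => ⟨horb1 w z, horb2 w z⟩
  have horbs : {A | IsOrbit τ A} = π := by
    ext A
    constructor
    · rintro ⟨w, rfl⟩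
      show {b | τ.SameCycle w b} ∈ π
      rw [horb w]; exact hblkmem w
    · intro hA
      have hne : A.Nonempty := Set.nonempty_iff_ne_empty.mpr
        (by rintro rfl; exact hpart.1 hA)
      obtain ⟨w, hw⟩ := hne
      exact ⟨w, by rw [horb w]; exact hblkuniq w A hA hw⟩
  refine ⟨τ, horbs, ?_, ?_⟩
  · intro A hA
    obtain ⟨w, rfl⟩ := hA
    have hAπ : {b | τ.SameCycle w b} ∈ π := by rw [horb w]; exact hblkmem w
    have hdich : (∀ z ∈ blk w, (z : ℕ) < p) ∨ (∀ z ∈ blk w, p ≤ (z : ℕ)) := by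
      by_contra hcon
      push_neg at hcon
      obtain ⟨⟨z1, hz1, hz1p⟩, ⟨z2, hz2, hz2p⟩⟩ := hcon
      exact hnoconn (blk w) (hblkmem w) ⟨⟨z2, hz2, (show (z2:ℕ) < p by omega)⟩, ⟨z1, hz1, (show p ≤ (z1:ℕ) by omega)⟩⟩
    have hblkb : ∀ b, b ∈ blk w → blk b = blk w :=
      fun b hb => (hblkuniq b (blk w) (hblkmem w) hb).symm
    constructor
    · intro b hb
      rcases hdich with hext | hint
      · have hAe : {b | τ.SameCycle w b} ∩ extSet p q = {b | τ.SameCycle w b} :=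
          Set.inter_eq_left.mpr (fun z hz => hext z (by rw [← horb w]; exact hz))
        rw [hAe] at hb ⊢
        have hbA : b ∈ blk w := by rw [← horb w]; exact hb
        have hbp : (b : ℕ) < p := hext b hbA
        have hτb : τ b ∈ {b | τ.SameCycle w b} := by
          rw [horb w, ← hblkb b hbA, hτap]
          exact hfmem b
        rw [induced_apply_mem hτb,
          induced_congr (S := {b | τ.SameCycle w b}) (fun k => gammaExt_iterate_eq hbp k),
          hτap]
        show induced (⇑γ) (blk b) b = induced (⇑γ) {b | τ.SameCycle w b} b
        rw [hblkb b hbA, horb w]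
      · exfalso
        have : b ∈ extSet p q := hb.2
        have hbA : b ∈ blk w := by rw [← horb w]; exact hb.1
        have := hint b hbA
        have hlt : (b : ℕ) < p := ‹b ∈ extSet p q›
        omega
    · intro b hb
      rcases hdich with hext | hint
      · exfalso
        have hbA : b ∈ blk w := by rw [← horb w]; exact hb.1
        have := hext b hbA
        have hge : p ≤ (b : ℕ) := hb.2
        omega
      · have hAe : {b | τ.SameCycle w b} ∩ intSet p q = {b | τ.SameCycle w b} :=
          Set.inter_eq_left.mpr (fun z hz => hint z (by rw [← horb w]; exact hz))
        rw [hAe] at hb ⊢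
        have hbA : b ∈ blk w := by rw [← horb w]; exact hb
        have hbp : p ≤ (b : ℕ) := hint b hbA
        have hτb : τ b ∈ {b | τ.SameCycle w b} := by
          rw [horb w, ← hblkb b hbA, hτap]
          exact hfmem b
        rw [induced_apply_mem hτb,
          induced_congr (S := {b | τ.SameCycle w b}) (fun k => gammaInt_iterate_eq hbp k),
          hτap]
        show induced (⇑γ) (blk b) b = induced (⇑γ) {b | τ.SameCycle w b} b
        rw [hblkb b hbA, horb w]
  · intro A hA h1 h2
    obtain ⟨w, rfl⟩ := hA
    refine absurd ⟨h1, h2⟩ (hnoconn _ ?_)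
    rw [horb w]; exact hblkmem w

end constr

/-- Proposition 4.5 1°: a partition `π` of `[p+q]` with no `(p,q)`-connecting block
(so `π = π_ext ∪ π_int`, where `π_ext` consists of the blocks contained in `{1,…,p}` and
`π_int` of the blocks contained in `{p+1,…,p+q}`) belongs to `NC_ann(p,q)` iff
`π_ext ∈ NC_disc({1,…,p})` and `π_int ∈ NC_disc({p+1,…,p+q})`. -/
theorem stmt_6 (p q : ℕ) (hp : 0 < p) (hq : 0 < q) (π : Set (Set (Fin (p + q))))
    (hpart : Setoid.IsPartition π)
    (hnoconn : ∀ B ∈ π, ¬ ConnectingBlock p q B) :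
    (∃ τ : Equiv.Perm (Fin (p + q)), AnnNC p q τ ∧ {A | IsOrbit τ A} = π) ↔
      NoCrossing {B | B ∈ π ∧ B ⊆ extSet p q} ∧
      NoCrossing {B | B ∈ π ∧ B ⊆ intSet p q} := by
  constructor
  · rintro ⟨τ, hτ, horbs⟩
    have hsame : ∀ {B : Set (Fin (p + q))} {x y : Fin (p + q)},
        B ∈ π → x ∈ B → y ∈ B → τ.SameCycle x y := by
      intro B x y hB hx hy
      rw [← horbs] at hB
      obtain ⟨w, rfl⟩ := hB
      exact (Equiv.Perm.SameCycle.symm hx).trans hy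
    have hdiff : ∀ {B C : Set (Fin (p + q))} {x y : Fin (p + q)},
        B ∈ π → C ∈ π → B ≠ C → x ∈ B → y ∈ C → ¬ τ.SameCycle x y := by
      intro B C x y hB hC hBC hx hy hsc
      have hOx : {z | τ.SameCycle x z} ∈ π := by rw [← horbs]; exact ⟨x, rfl⟩
      have e1 : B = {z | τ.SameCycle x z} :=
        ExistsUnique.unique (hpart.2 x) ⟨hB, hx⟩ ⟨hOx, Equiv.Perm.SameCycle.refl τ x⟩
      have hyB : y ∈ B := by rw [e1]; exact hsc
      exact hBC (ExistsUnique.unique (hpart.2 y) ⟨hB, hyB⟩ ⟨hC, hy⟩)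
    constructor
    · rintro ⟨a, b, c, d, B, C, ⟨hBπ, hBe⟩, ⟨hCπ, hCe⟩, hBC, hab, hbc, hcd,
        haB, hcB, hbC, hdC⟩
      exact hτ.2.1 (ac1_of_crossing hab hbc hcd (Or.inl (hCe hdC))
        (hsame hBπ haB hcB) (hsame hCπ hbC hdC) (hdiff hBπ hCπ hBC haB hbC))
    · rintro ⟨a, b, c, d, B, C, ⟨hBπ, hBe⟩, ⟨hCπ, hCe⟩, hBC, hab, hbc, hcd,
        haB, hcB, hbC, hdC⟩
      exact hτ.2.1 (ac1_of_crossing hab hbc hcd (Or.inr (hBe haB))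
        (hsame hBπ haB hcB) (hsame hCπ hbC hdC) (hdiff hBπ hCπ hBC haB hbC))
  · rintro ⟨hNCe, hNCi⟩
    obtain ⟨τ, horbs, hstd⟩ := exists_std_perm hp hq π hpart hnoconn
    refine ⟨τ, ⟨hstd, ?_, ?_, ?_⟩, horbs⟩
    · intro hAC1
      obtain ⟨a, b, c, d, h1, h2, h3, hside, hac, hbd, hnab⟩ := crossing_of_ac1 hAC1
      have hBπ : {z | τ.SameCycle a z} ∈ π := by rw [← horbs]; exact ⟨a, rfl⟩
      have hCπ : {z | τ.SameCycle b z} ∈ π := by rw [← horbs]; exact ⟨b, rfl⟩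
      have hBC : {z | τ.SameCycle a z} ≠ {z | τ.SameCycle b z} := by
        intro h
        have haB : a ∈ {z | τ.SameCycle a z} := Equiv.Perm.SameCycle.refl τ a
        rw [h] at haB
        exact hnab (Equiv.Perm.SameCycle.symm haB)
      rcases hside with hd | ha
      · have hBe : {z | τ.SameCycle a z} ⊆ extSet p q := by
          intro z hz
          by_contra hzp
          have hzp' : ¬ (z : ℕ) < p := hzp
          exact hnoconn _ hBπ ⟨⟨a, Equiv.Perm.SameCycle.refl τ a,
            (show (a : ℕ) < p by omega)⟩, ⟨z, hz, (show p ≤ (z : ℕ) by omega)⟩⟩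
        have hCe : {z | τ.SameCycle b z} ⊆ extSet p q := by
          intro z hz
          by_contra hzp
          have hzp' : ¬ (z : ℕ) < p := hzp
          exact hnoconn _ hCπ ⟨⟨b, Equiv.Perm.SameCycle.refl τ b,
            (show (b : ℕ) < p by omega)⟩, ⟨z, hz, (show p ≤ (z : ℕ) by omega)⟩⟩
        exact hNCe ⟨a, b, c, d, _, _, ⟨hBπ, hBe⟩, ⟨hCπ, hCe⟩, hBC, h1, h2, h3,
          Equiv.Perm.SameCycle.refl τ a, hac, Equiv.Perm.SameCycle.refl τ b, hbd⟩
      · have hBe : {z | τ.SameCycle a z} ⊆ intSet p q := by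
          intro z hz
          by_contra hzp
          have hzp' : ¬ p ≤ (z : ℕ) := hzp
          exact hnoconn _ hBπ ⟨⟨z, hz, (show (z : ℕ) < p by omega)⟩,
            ⟨a, Equiv.Perm.SameCycle.refl τ a, (show p ≤ (a : ℕ) by omega)⟩⟩
        have hCe : {z | τ.SameCycle b z} ⊆ intSet p q := by
          intro z hz
          by_contra hzp
          have hzp' : ¬ p ≤ (z : ℕ) := hzp
          exact hnoconn _ hCπ ⟨⟨z, hz, (show (z : ℕ) < p by omega)⟩,
            ⟨b, Equiv.Perm.SameCycle.refl τ b, (show p ≤ (b : ℕ) by omega)⟩⟩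
        exact hNCi ⟨a, b, c, d, _, _, ⟨hBπ, hBe⟩, ⟨hCπ, hCe⟩, hBC, h1, h2, h3,
          Equiv.Perm.SameCycle.refl τ a, hac, Equiv.Perm.SameCycle.refl τ b, hbd⟩
    · rintro ⟨a, b, c, x, y, hpw, hx, hy, _h3, _h4, hswap⟩
      have hxS : x ∈ ({a, b, c, x, y} : Set (Fin (p + q))) := by simp
      have hsc : τ.SameCycle x y := by
        have := sameCycle_induced (τ := τ) hxS
        rwa [hswap.1] at this
      have hOπ : {z | τ.SameCycle x z} ∈ π := by rw [← horbs]; exact ⟨x, rfl⟩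
      exact hnoconn _ hOπ ⟨⟨x, Equiv.Perm.SameCycle.refl τ x, hx⟩, ⟨y, hsc, hy⟩⟩
    · rintro ⟨a, b, c, d, x, y, hpw, hx, hy, _h3, _h4, hswap⟩
      have hxS : x ∈ ({a, b, c, d, x, y} : Set (Fin (p + q))) := by simp
      have hsc : τ.SameCycle x y := by
        have := sameCycle_induced (τ := τ) hxS
        rwa [hswap.1] at this
      have hOπ : {z | τ.SameCycle x z} ∈ π := by rw [← horbs]; exact ⟨x, rfl⟩
      exact hnoconn _ hOπ ⟨⟨x, Equiv.Perm.SameCycle.refl τ x, hx⟩, ⟨y, hsc, hy⟩⟩
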